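/- Let K be a field with char(K) = 0 or char(K) > n, and let f ∈ K[x_1,...,x_n] be homogeneous of degree d with only square-free terms. If f(1,1,...,1) ≠ 0, then for all N ≥ n+d, in K[x_1,...,x_N] the ideal generated by the S_N-orbit of f equals the ideal generated by the S_N-orbit of x_1 x_2 ··· x_d. -/

import Mathlib

open MvPolynomial

/-- The ideal generated by the `S_N`-orbit of `f`. -/
noncomputable def symOrbitIdeal {K : Type*} [Field K] {N : ℕ} (f : MvPolynomial (Fin N) K) :
    Ideal (MvPolynomial (Fin N) K) :=
  Ideal.span {g | ∃ σ : Equiv.Perm (Fin N), g = rename σ f}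

namespace SqFreeOrbit

open Finset Function

/-! ### Generic helpers -/

lemma cast_ne_zero_of_char {K : Type*} [Field K] (n : ℕ)
    (hchar : ringChar K = 0 ∨ n < ringChar K)
    {m : ℕ} (hm : 0 < m) (hdvd : m ∣ n.factorial) : (m : K) ≠ 0 := by
  rcases hchar with h0 | hp
  · haveI : CharP K 0 := h0 ▸ ringChar.charP K
    haveI : CharZero K := CharP.charP_to_charZero K
    exact Nat.cast_ne_zero.mpr hm.ne'
  · have hp' : (ringChar K).Prime := by
      rcases CharP.char_is_prime_or_zero K (ringChar K) with h | h
      · exact h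
      · omega
    haveI : CharP K (ringChar K) := ringChar.charP K
    rw [Ne, CharP.cast_eq_zero_iff K (ringChar K)]
    intro hcontra
    have : ringChar K ∣ n.factorial := hcontra.trans hdvd
    have := (Nat.Prime.dvd_factorial hp').mp this
    omega

lemma choose_cast_ne_zero {K : Type*} [Field K] (n : ℕ)
    (hchar : ringChar K = 0 ∨ n < ringChar K)
    {x y : ℕ} (hx : x ≤ n) (hy : y ≤ x) : ((x.choose y : ℕ) : K) ≠ 0 :=
  cast_ne_zero_of_char n hchar (Nat.choose_pos hy)
    (dvd_trans ⟨y.factorial * (x - y).factorial, by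
        rw [← mul_assoc, Nat.choose_mul_factorial_mul_factorial hy]⟩
      (Nat.factorial_dvd_factorial hx))

/-- every permutation matching two injections -/
lemma exists_perm_comp {α β : Type*} [Fintype α] [Fintype β] [DecidableEq α] [DecidableEq β]
    (u v : α → β) (hu : Function.Injective u) (hv : Function.Injective v) :
    ∃ σ : Equiv.Perm β, ∀ a, σ (u a) = v a := by
  classical
  let su : Finset β := Finset.univ.image u
  let sv : Finset β := Finset.univ.image v
  have hmu : ∀ a, u a ∈ su := fun a => Finset.mem_image_of_mem u (Finset.mem_univ a)
  have hmv : ∀ a, v a ∈ sv := fun a => Finset.mem_image_of_mem v (Finset.mem_univ a)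
  let eu : α ≃ {x // x ∈ su} := Equiv.ofBijective (fun a => ⟨u a, hmu a⟩)
    (by
      constructor
      · intro a b hab
        exact hu (congrArg Subtype.val hab)
      · rintro ⟨b, hb⟩
        obtain ⟨a, -, rfl⟩ := Finset.mem_image.mp hb
        exact ⟨a, rfl⟩)
  let ev : α ≃ {x // x ∈ sv} := Equiv.ofBijective (fun a => ⟨v a, hmv a⟩)
    (by
      constructor
      · intro a b hab
        exact hv (congrArg Subtype.val hab)
      · rintro ⟨b, hb⟩
        obtain ⟨a, -, rfl⟩ := Finset.mem_image.mp hb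
        exact ⟨a, rfl⟩)
  let e : {x // x ∈ su} ≃ {x // x ∈ sv} := eu.symm.trans ev
  refine ⟨e.extendSubtype, fun a => ?_⟩
  rw [Equiv.extendSubtype_apply_of_mem e (u a) (hmu a)]
  have : eu.symm ⟨u a, hmu a⟩ = a := by
    rw [Equiv.symm_apply_eq]; rfl
  simp only [e, Equiv.trans_apply, this]
  rfl

lemma exists_perm_image {β : Type*} [Fintype β] [DecidableEq β]
    (s t : Finset β) (h : s.card = t.card) :
    ∃ σ : Equiv.Perm β, s.image σ = t := by
  classical
  set m := s.card with hm
  have ht : t.card = m := h.symm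
  let us : Fin m → β := fun i => (s.equivFin.symm i : β)
  let ut : Fin m → β := fun i => (t.equivFin.symm (Fin.cast ht.symm i) : β)
  have hus : Function.Injective us := fun i j hij => by
    have := s.equivFin.symm.injective (Subtype.ext hij); exact this
  have hut : Function.Injective ut := fun i j hij => by
    have := t.equivFin.symm.injective (Subtype.ext hij)
    exact Fin.cast_injective _ (by exact_mod_cast this)
  obtain ⟨σ, hσ⟩ := exists_perm_comp us ut hus hut
  refine ⟨σ, ?_⟩
  have hs : ∀ x, x ∈ s ↔ ∃ i : Fin m, us i = x := by
    intro x
    constructor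
    · intro hx; exact ⟨s.equivFin ⟨x, hx⟩, by simp [us]⟩
    · rintro ⟨i, rfl⟩; exact (s.equivFin.symm i).2
  have htm : ∀ x, x ∈ t ↔ ∃ i : Fin m, ut i = x := by
    intro x
    constructor
    · intro hx; exact ⟨Fin.cast ht (t.equivFin ⟨x, hx⟩), by simp [ut]⟩
    · rintro ⟨i, rfl⟩; exact (t.equivFin.symm _).2
  ext x
  simp only [Finset.mem_image]
  constructor
  · rintro ⟨y, hy, rfl⟩
    obtain ⟨i, rfl⟩ := (hs y).mp hy
    rw [hσ i]
    exact (htm _).mpr ⟨i, rfl⟩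
  · intro hx
    obtain ⟨i, rfl⟩ := (htm x).mp hx
    exact ⟨us i, (hs _).mpr ⟨i, rfl⟩, hσ i⟩

/-! ### The coefficient sequence -/

noncomputable def delta (K : Type*) [Field K] (n d : ℕ) : ℕ → K
  | s =>
    ((if s = 0 then (1:K) else 0) -
      ∑ r ∈ (Finset.range s).attach,
        ((s.choose (s - r.1) * ((n - s).choose (d - r.1)) : ℕ) : K) * delta K n d r.1) /
    (((n - s).choose (d - s) : ℕ) : K)
decreasing_by exact Finset.mem_range.mp r.2

lemma delta_def (K : Type*) [Field K] (n d s : ℕ) :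
    delta K n d s = ((if s = 0 then (1:K) else 0) -
      ∑ r ∈ Finset.range s,
        ((s.choose (s - r) * ((n - s).choose (d - r)) : ℕ) : K) * delta K n d r) /
    (((n - s).choose (d - s) : ℕ) : K) := by
  rw [delta]
  rw [Finset.sum_attach (Finset.range s)
    (fun r => ((s.choose (s - r) * ((n - s).choose (d - r)) : ℕ) : K) * delta K n d r)]

lemma delta_identity {K : Type*} [Field K] {n d : ℕ}
    (hchar : ringChar K = 0 ∨ n < ringChar K) (hdn : d ≤ n) {t : ℕ} (ht : t ≤ d) :
    ∑ a ∈ Finset.range (d+1), (if t ≤ a then (((d-t).choose (a-t) : ℕ) : K) else 0) *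
      ((((n-d+t).choose a : ℕ) : K) * delta K n d (d - a)) = if t = d then 1 else 0 := by
  set s := d - t with hs
  have hsd : s ≤ d := by omega
  have hnds : n - d + t = n - s := by omega
  have h1 : ∑ a ∈ Finset.range (d+1), (if t ≤ a then (((d-t).choose (a-t) : ℕ) : K) else 0) *
      ((((n-d+t).choose a : ℕ) : K) * delta K n d (d - a))
      = ∑ r ∈ Finset.range (s+1), ((s.choose (s-r) * ((n-s).choose (d-r)) : ℕ) : K) *
        delta K n d r := by
    rw [show (∑ a ∈ Finset.range (d+1), (if t ≤ a then (((d-t).choose (a-t) : ℕ) : K) else 0) *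
      ((((n-d+t).choose a : ℕ) : K) * delta K n d (d - a)))
      = ∑ a ∈ Finset.range (d+1), (if t ≤ a then
          (((d-t).choose (a-t) * ((n-d+t).choose a) : ℕ) : K) * delta K n d (d - a) else 0) from
      Finset.sum_congr rfl (fun a _ => by split <;> push_cast <;> ring)]
    rw [← Finset.sum_filter]
    refine Finset.sum_nbij' (fun a => d - a) (fun r => d - r) ?_ ?_ ?_ ?_ ?_
    · intro a ha
      simp only [Finset.mem_filter, Finset.mem_range] at ha ⊢
      omega
    · intro r hr
      simp only [Finset.mem_filter, Finset.mem_range] at hr ⊢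
      omega
    · intro a ha
      simp only [Finset.mem_filter, Finset.mem_range] at ha
      omega
    · intro r hr
      simp only [Finset.mem_range] at hr
      omega
    · intro a ha
      simp only [Finset.mem_filter, Finset.mem_range] at ha
      have e1 : s.choose (s - (d - a)) = (d-t).choose (a-t) := by
        congr 1 <;> omega
      have e2 : (n-s).choose (d - (d - a)) = (n-d+t).choose a := by
        congr 1 <;> omega
      rw [e1, e2]
  rw [h1, Finset.sum_range_succ, delta_def]
  have hdiag : (((n - s).choose (d - s) : ℕ) : K) ≠ 0 :=
    choose_cast_ne_zero n hchar (by omega) (by omega)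
  have e3 : ((s.choose (s - s) * ((n - s).choose (d - s)) : ℕ) : K)
      = (((n - s).choose (d - s) : ℕ) : K) := by
    norm_num
  rw [e3, mul_comm, div_mul_cancel₀ _ hdiag]
  have e4 : (if s = 0 then (1:K) else 0) = if t = d then 1 else 0 := by
    split_ifs with ha hb <;> first | rfl | omega
  rw [← e4]
  ring
/-! ### Counting lemmas -/

lemma card_filter_lt (M d : ℕ) (h : d ≤ M) :
    ((Finset.univ : Finset (Fin M)).filter fun i : Fin M => (i : ℕ) < d).card = d := by
  have : ((Finset.univ : Finset (Fin M)).filter fun i : Fin M => (i : ℕ) < d)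
      = (Finset.univ : Finset (Fin d)).image (Fin.castLE h) := by
    ext x
    simp only [Finset.mem_filter, Finset.mem_univ, true_and, Finset.mem_image]
    constructor
    · intro hx; exact ⟨⟨x.1, hx⟩, Fin.val_injective rfl⟩
    · rintro ⟨y, -, rfl⟩; exact y.2
  rw [this, Finset.card_image_of_injective _ (Fin.castLE_injective h), Finset.card_univ,
    Fintype.card_fin]

lemma count1 {β : Type*} [Fintype β] [DecidableEq β] (D T A : Finset β) (n d : ℕ)
    (hβ : Fintype.card β = n + d) (hdn : d ≤ n) (hD : D.card = d) (hT : T.card = d)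
    (hA : A ⊆ D) (hTA : T ∩ D ⊆ A) :
    ((Finset.univ.powersetCard n).filter fun V => T ⊆ V ∧ V ∩ D = A).card
      = ((n - d + (T ∩ D).card).choose A.card) := by
  classical
  set B : Finset β := Dᶜ with hB
  set t := (T ∩ D).card with htdef
  have htd : t ≤ d := hT ▸ Finset.card_le_card Finset.inter_subset_left
  have hTD : (T \ D).card + t = d := by
    rw [htdef, Finset.card_sdiff_add_card_inter, hT]
  have hBcard : B.card = n := by
    rw [hB, Finset.card_compl, hβ, hD]; omega
  have hBT : B ∩ T = T \ D := by
    ext x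
    simp only [hB, Finset.mem_inter, Finset.mem_compl, Finset.mem_sdiff]
    tauto
  have hBTcard : (B \ T).card = n - d + t := by
    have := Finset.card_sdiff_add_card_inter B T
    rw [hBT] at this
    omega
  have key : ((Finset.univ.powersetCard n).filter fun V => T ⊆ V ∧ V ∩ D = A).card
      = (Finset.powersetCard A.card (B \ T)).card := by
    apply Finset.card_nbij' (fun V => (B \ T) \ V) (fun W => A ∪ (T ∪ ((B \ T) \ W)))
    · intro V hV
      simp only [Finset.mem_filter, Finset.mem_powersetCard_univ, Finset.mem_coe] at hV
      obtain ⟨hVn, hTV, hVD⟩ := hV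
      simp only [Finset.mem_coe, Finset.mem_powersetCard]
      refine ⟨Finset.sdiff_subset, ?_⟩
      have e1 := Finset.card_sdiff_add_card_inter (B \ T) V
      have e2 : (B \ T) ∩ V = (V \ D) \ T := by
        rw [hB]; ext x
        simp only [Finset.mem_sdiff, Finset.mem_inter, Finset.mem_compl]
        tauto
      have e3 := Finset.card_sdiff_add_card_inter (V \ D) T
      have e4 : (V \ D) ∩ T = T \ D := by
        ext x
        simp only [Finset.mem_sdiff, Finset.mem_inter]
        exact ⟨fun h => ⟨h.2, h.1.2⟩, fun h => ⟨⟨hTV h.1, h.2⟩, h.1⟩⟩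
      have e5 := Finset.card_sdiff_add_card_inter V D
      rw [e2] at e1
      rw [e4] at e3
      rw [hVD] at e5
      omega
    · intro W hW
      rw [Finset.mem_coe, Finset.mem_powersetCard] at hW
      obtain ⟨hWBT, hWcard⟩ := hW
      have hdisj1 : ∀ x ∈ ((B \ T) \ W), x ∉ A ∧ x ∉ T := by
        intro x hx
        rw [Finset.mem_sdiff, Finset.mem_sdiff, hB, Finset.mem_compl] at hx
        exact ⟨fun hxA => hx.1.1 (hA hxA), hx.1.2⟩
      simp only [Finset.mem_filter, Finset.mem_powersetCard_univ, Finset.mem_coe]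
      have hAT : A ∩ T = T ∩ D := by
        ext x
        simp only [Finset.mem_inter]
        exact ⟨fun h => ⟨h.2, hA h.1⟩, fun h => ⟨hTA (Finset.mem_inter.mpr h),
          (Finset.mem_inter.mp (Finset.mem_inter.mpr h)).1⟩⟩
      refine ⟨?_, ?_, ?_⟩
      · -- card
        have c1 : (A ∪ T).card = A.card + (d - t) := by
          have := Finset.card_union_add_card_inter A T
          rw [hAT, hT] at this
          omega
        have c2 : ((A ∪ T) ∪ ((B \ T) \ W)).card = (A ∪ T).card + ((B \ T) \ W).card := by
          apply Finset.card_union_of_disjoint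
          rw [Finset.disjoint_left]
          intro x hx hx2
          have := hdisj1 x hx2
          rcases Finset.mem_union.mp hx with h | h
          · exact this.1 h
          · exact this.2 h
        have c3 : ((B \ T) \ W).card = (n - d + t) - A.card := by
          have : W ⊆ B \ T := hWBT
          have := Finset.card_sdiff_add_card_eq_card this
          omega
        have hAcard : A.card ≤ n - d + t := by
          rw [← hWcard, ← hBTcard]
          exact Finset.card_le_card hWBT
        rw [← Finset.union_assoc]
        rw [c2, c1, c3]
        omega
      · intro x hx
        exact Finset.mem_union.mpr (Or.inr (Finset.mem_union.mpr (Or.inl hx)))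
      · ext x
        simp only [Finset.mem_inter, Finset.mem_union]
        constructor
        · rintro ⟨h1 | h1 | h1, h2⟩
          · exact h1
          · exact hTA (Finset.mem_inter.mpr ⟨h1, h2⟩)
          · exact absurd h2 (by
              rw [Finset.mem_sdiff, Finset.mem_sdiff, hB, Finset.mem_compl] at h1
              exact h1.1.1)
        · intro hxA
          exact ⟨Or.inl hxA, hA hxA⟩
    · intro V hV
      simp only [Finset.mem_filter, Finset.mem_powersetCard_univ, Finset.mem_coe] at hV
      obtain ⟨hVn, hTV, hVD⟩ := hV
      beta_reduce
      rw [Finset.sdiff_sdiff_self_left]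
      have hVD' : ∀ x, x ∈ V → x ∈ D → x ∈ A := fun x h1 h2 => by
        rw [← hVD]; exact Finset.mem_inter.mpr ⟨h1, h2⟩
      have hAV : ∀ x, x ∈ A → x ∈ V := fun x h => by
        rw [← hVD] at h; exact (Finset.mem_inter.mp h).1
      ext x
      simp only [Finset.mem_union, Finset.mem_inter, Finset.mem_sdiff, hB, Finset.mem_compl]
      constructor
      · rintro (h | h | h)
        · exact hAV x h
        · exact hTV h
        · exact h.2
      · intro hxV
        by_cases hxD : x ∈ D
        · exact Or.inl (hVD' x hxV hxD)
        · by_cases hxT : x ∈ T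
          · exact Or.inr (Or.inl hxT)
          · exact Or.inr (Or.inr ⟨⟨hxD, hxT⟩, hxV⟩)
    · intro W hW
      rw [Finset.mem_coe, Finset.mem_powersetCard] at hW
      obtain ⟨hWBT, hWcard⟩ := hW
      ext x
      simp only [Finset.mem_sdiff, Finset.mem_union]
      constructor
      · rintro ⟨⟨hxB, hxT⟩, hxn⟩
        by_contra hxW
        exact hxn (Or.inr (Or.inr ⟨⟨hxB, hxT⟩, hxW⟩))
      · intro hxW
        obtain ⟨hxB, hxT⟩ := Finset.mem_sdiff.mp (hWBT hxW)
        refine ⟨⟨hxB, hxT⟩, ?_⟩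
        rintro (h | h | h)
        · rw [hB, Finset.mem_compl] at hxB; exact hxB (hA h)
        · exact hxT h
        · exact h.2 hxW
  rw [key, Finset.card_powersetCard, hBTcard]

lemma count2 {β : Type*} [DecidableEq β] (D T' : Finset β) (a : ℕ) (hT' : T' ⊆ D)
    (ha : T'.card ≤ a) :
    (D.powerset.filter fun A => A.card = a ∧ T' ⊆ A).card
      = (D.card - T'.card).choose (a - T'.card) := by
  have key : (D.powerset.filter fun A => A.card = a ∧ T' ⊆ A).card
      = (Finset.powersetCard (a - T'.card) (D \ T')).card := by
    apply Finset.card_nbij' (fun A => A \ T') (fun P => T' ∪ P)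
    · intro A hA
      simp only [Finset.mem_filter, Finset.mem_powerset, Finset.mem_coe] at hA
      obtain ⟨hAD, hAa, hTA⟩ := hA
      simp only [Finset.mem_coe, Finset.mem_powersetCard]
      refine ⟨Finset.sdiff_subset_sdiff hAD Finset.Subset.rfl, ?_⟩
      rw [Finset.card_sdiff_of_subset hTA, hAa]
    · intro P hP
      rw [Finset.mem_coe, Finset.mem_powersetCard] at hP
      obtain ⟨hPD, hPcard⟩ := hP
      have hdisj : Disjoint T' P := by
        rw [Finset.disjoint_left]
        intro x hx hxP
        exact (Finset.mem_sdiff.mp (hPD hxP)).2 hx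
      simp only [Finset.mem_filter, Finset.mem_powerset, Finset.mem_coe]
      refine ⟨Finset.union_subset hT' (hPD.trans Finset.sdiff_subset), ?_, Finset.subset_union_left⟩
      rw [Finset.card_union_of_disjoint hdisj, hPcard]
      omega
    · intro A hA
      simp only [Finset.mem_filter, Finset.mem_powerset, Finset.mem_coe] at hA
      exact Finset.union_sdiff_of_subset hA.2.2
    · intro P hP
      rw [Finset.mem_coe, Finset.mem_powersetCard] at hP
      apply Finset.union_sdiff_cancel_left
      rw [Finset.disjoint_left]
      intro x hx hxP
      exact (Finset.mem_sdiff.mp (hP.1 hxP)).2 hx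
  rw [key, Finset.card_powersetCard, Finset.card_sdiff_of_subset hT']

lemma gamma_sum {K : Type*} [Field K] {β : Type*} [Fintype β] [DecidableEq β]
    {n d : ℕ} (hchar : ringChar K = 0 ∨ n < ringChar K) (hdn : d ≤ n)
    (hβ : Fintype.card β = n + d)
    (D : Finset β) (hD : D.card = d) (T : Finset β) (hT : T.card = d) :
    ∑ V ∈ (Finset.univ.powersetCard n).filter (fun V => T ⊆ V),
        delta K n d (d - (V ∩ D).card)
      = if T = D then 1 else 0 := by
  classical
  set t := (T ∩ D).card with ht
  have htd : t ≤ d := hT ▸ Finset.card_le_card Finset.inter_subset_left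
  rw [← Finset.sum_fiberwise_of_maps_to (g := fun V => V ∩ D) (t := D.powerset)
    (fun V _ => Finset.mem_powerset.mpr Finset.inter_subset_right)
    (fun V => delta K n d (d - (V ∩ D).card))]
  have step1 : ∀ A ∈ D.powerset,
      (∑ V ∈ ((Finset.univ.powersetCard n).filter (fun V => T ⊆ V)).filter
          (fun V => V ∩ D = A), delta K n d (d - (V ∩ D).card))
      = (if T ∩ D ⊆ A then (((n-d+t).choose A.card : ℕ) : K) else 0)
          * delta K n d (d - A.card) := by
    intro A hA
    rw [Finset.filter_filter]
    rw [Finset.sum_congr rfl (fun V hV => by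
      rw [(Finset.mem_filter.mp hV).2.2] :
        ∀ V ∈ (Finset.univ.powersetCard n).filter (fun V => T ⊆ V ∧ V ∩ D = A),
          delta K n d (d - (V ∩ D).card) = delta K n d (d - A.card))]
    rw [Finset.sum_const]
    by_cases hTA : T ∩ D ⊆ A
    · rw [count1 D T A n d hβ hdn hD hT (Finset.mem_powerset.mp hA) hTA, if_pos hTA,
        nsmul_eq_mul]
    · have hempty : (Finset.univ.powersetCard n).filter (fun V => T ⊆ V ∧ V ∩ D = A) = ∅ := by
        rw [Finset.filter_eq_empty_iff]
        intro V _
        rintro ⟨hTV, hVD⟩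
        exact hTA (hVD ▸ fun x hx => Finset.mem_inter.mpr
          ⟨hTV (Finset.mem_inter.mp hx).1, (Finset.mem_inter.mp hx).2⟩)
      rw [hempty, if_neg hTA]
      simp
  rw [Finset.sum_congr rfl step1]
  rw [← Finset.sum_fiberwise_of_maps_to (g := Finset.card) (t := Finset.range (d+1))
    (fun A hA => Finset.mem_range.mpr
      (by have := Finset.card_le_card (Finset.mem_powerset.mp hA); omega))
    (fun A => (if T ∩ D ⊆ A then (((n-d+t).choose A.card : ℕ) : K) else 0)
          * delta K n d (d - A.card))]
  have step2 : ∀ a ∈ Finset.range (d+1),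
      (∑ A ∈ D.powerset.filter (fun A => A.card = a),
        (if T ∩ D ⊆ A then (((n-d+t).choose A.card : ℕ) : K) else 0)
          * delta K n d (d - A.card))
      = (if t ≤ a then (((d-t).choose (a-t) : ℕ) : K) else 0) *
          ((((n-d+t).choose a : ℕ) : K) * delta K n d (d - a)) := by
    intro a _
    by_cases hta : t ≤ a
    · rw [Finset.sum_congr rfl (fun A hA => by
        rw [(Finset.mem_filter.mp hA).2, ite_mul, zero_mul] :
          ∀ A ∈ D.powerset.filter (fun A => A.card = a),
            (if T ∩ D ⊆ A then (((n-d+t).choose A.card : ℕ) : K) else 0)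
              * delta K n d (d - A.card)
            = if T ∩ D ⊆ A then (((n-d+t).choose a : ℕ) : K) * delta K n d (d - a) else 0)]
      rw [← Finset.sum_filter, Finset.filter_filter, Finset.sum_const]
      rw [count2 D (T ∩ D) a Finset.inter_subset_right (by rw [← ht]; exact hta), hD, ← ht]
      rw [if_pos hta, nsmul_eq_mul]
    · rw [Finset.sum_congr rfl (fun A hA => by
        have h1 := (Finset.mem_filter.mp hA).2
        have h2 : ¬ (T ∩ D ⊆ A) := fun hsub => hta (h1 ▸ Finset.card_le_card hsub)
        rw [if_neg h2, zero_mul] :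
          ∀ A ∈ D.powerset.filter (fun A => A.card = a),
            (if T ∩ D ⊆ A then (((n-d+t).choose A.card : ℕ) : K) else 0)
              * delta K n d (d - A.card) = 0)]
      rw [Finset.sum_const_zero, if_neg hta, zero_mul]
  rw [Finset.sum_congr rfl step2, delta_identity hchar hdn htd]
  by_cases hTD : T = D
  · have : t = d := by rw [ht, hTD, Finset.inter_self, hD]
    rw [if_pos this, if_pos hTD]
  · have htne : t ≠ d := by
      intro htd'
      apply hTD
      have hcd : (T ∩ D).card = T.card := by rw [← ht, htd', hT]
      have h1 : T ∩ D = T := Finset.eq_of_subset_of_card_le Finset.inter_subset_left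
        (le_of_eq hcd.symm)
      have h2 : T ⊆ D := h1 ▸ Finset.inter_subset_right
      exact Finset.eq_of_subset_of_card_le h2 (le_of_eq (by rw [hT, hD]))
    rw [if_neg htne, if_neg hTD]

lemma fiber_card {α β : Type*} [Fintype α] [Fintype β] [DecidableEq α] [DecidableEq β]
    (S : Finset α) (V T : Finset β) (hST : S.card = T.card) (hTV : T ⊆ V)
    (hcompl : Sᶜ.card = (V \ T).card) :
    (Finset.univ.filter fun ι : α ↪ β =>
        Finset.univ.image ⇑ι = V ∧ S.image ⇑ι = T).card
      = (S.card).factorial * (Sᶜ.card).factorial := by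
  classical
  rw [← Fintype.card_subtype]
  have hmem1 : ∀ (ι : α ↪ β), S.image ⇑ι = T → ∀ i : α, i ∈ S → ι i ∈ T := by
    intro ι h i hi; rw [← h]; exact Finset.mem_image_of_mem _ hi
  have hmem2 : ∀ (ι : α ↪ β), Finset.univ.image ⇑ι = V → S.image ⇑ι = T →
      ∀ i : α, i ∉ S → ι i ∈ V \ T := by
    intro ι hV hT' i hi
    rw [Finset.mem_sdiff]
    constructor
    · rw [← hV]; exact Finset.mem_image_of_mem _ (Finset.mem_univ i)
    · intro hiT
      rw [← hT'] at hiT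
      obtain ⟨j, hj, hji⟩ := Finset.mem_image.mp hiT
      exact hi (ι.injective hji ▸ hj)
  have E : {ι : α ↪ β // Finset.univ.image ⇑ι = V ∧ S.image ⇑ι = T}
      ≃ (({i // i ∈ S} ≃ {x // x ∈ T}) × ({i // i ∈ Sᶜ} ≃ {x // x ∈ V \ T})) := by
    refine Equiv.mk (fun x => ?_) (fun p => ?_) ?_ ?_
    · refine ⟨Equiv.ofBijective
        (fun i => ⟨x.1 i.1, hmem1 x.1 x.2.2 i.1 i.2⟩)
        ((Fintype.bijective_iff_injective_and_card _).mpr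
          ⟨fun a b h => Subtype.ext (x.1.injective (congrArg Subtype.val h)),
            by simp only [Fintype.card_coe, hST]⟩),
        Equiv.ofBijective
        (fun i => ⟨x.1 i.1, hmem2 x.1 x.2.1 x.2.2 i.1 (Finset.mem_compl.mp i.2)⟩)
        ((Fintype.bijective_iff_injective_and_card _).mpr
          ⟨fun a b h => Subtype.ext (x.1.injective (congrArg Subtype.val h)),
            by simp only [Fintype.card_coe, hcompl]⟩)⟩
    · -- inverse
      refine ⟨⟨fun i => if h : i ∈ S then (p.1 ⟨i, h⟩ : β)
          else (p.2 ⟨i, Finset.mem_compl.mpr h⟩ : β), ?_⟩, ?_, ?_⟩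
      · intro a b hab
        dsimp only at hab
        by_cases ha : a ∈ S <;> by_cases hb : b ∈ S
        · rw [dif_pos ha, dif_pos hb] at hab
          exact congrArg Subtype.val (p.1.injective (Subtype.ext hab))
        · rw [dif_pos ha, dif_neg hb] at hab
          have h1 := (p.1 ⟨a, ha⟩).2
          have h2 := (p.2 ⟨b, Finset.mem_compl.mpr hb⟩).2
          rw [← hab] at h2
          exact absurd (Finset.mem_sdiff.mp h2).2 (not_not.mpr h1)
        · rw [dif_neg ha, dif_pos hb] at hab
          have h1 := (p.1 ⟨b, hb⟩).2
          have h2 := (p.2 ⟨a, Finset.mem_compl.mpr ha⟩).2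
          rw [hab] at h2
          exact absurd (Finset.mem_sdiff.mp h2).2 (not_not.mpr h1)
        · rw [dif_neg ha, dif_neg hb] at hab
          exact congrArg Subtype.val (p.2.injective (Subtype.ext hab))
      · -- univ.image = V
        ext x
        simp only [Finset.mem_image, Finset.mem_univ, true_and]
        constructor
        · rintro ⟨i, rfl⟩
          show (if h : i ∈ S then _ else _) ∈ V
          by_cases h : i ∈ S
          · rw [dif_pos h]; exact hTV (p.1 ⟨i, h⟩).2
          · rw [dif_neg h]; exact (Finset.mem_sdiff.mp (p.2 ⟨i, Finset.mem_compl.mpr h⟩).2).1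
        · intro hx
          by_cases hxT : x ∈ T
          · refine ⟨(p.1.symm ⟨x, hxT⟩).1, ?_⟩
            show (if h : _ ∈ S then _ else _) = x
            rw [dif_pos (p.1.symm ⟨x, hxT⟩).2]
            rw [Subtype.coe_eta, Equiv.apply_symm_apply]
          · refine ⟨(p.2.symm ⟨x, Finset.mem_sdiff.mpr ⟨hx, hxT⟩⟩).1, ?_⟩
            show (if h : _ ∈ S then _ else _) = x
            rw [dif_neg (Finset.mem_compl.mp (p.2.symm ⟨x, Finset.mem_sdiff.mpr ⟨hx, hxT⟩⟩).2)]
            rw [Subtype.coe_eta, Equiv.apply_symm_apply]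
      · -- S.image = T
        ext x
        simp only [Finset.mem_image]
        constructor
        · rintro ⟨i, hi, rfl⟩
          show (if h : i ∈ S then _ else _) ∈ T
          rw [dif_pos hi]
          exact (p.1 ⟨i, hi⟩).2
        · intro hx
          refine ⟨(p.1.symm ⟨x, hx⟩).1, (p.1.symm ⟨x, hx⟩).2, ?_⟩
          show (if h : _ ∈ S then _ else _) = x
          rw [dif_pos (p.1.symm ⟨x, hx⟩).2]
          rw [Subtype.coe_eta, Equiv.apply_symm_apply]
    · intro x
      apply Subtype.ext
      apply Function.Embedding.ext
      intro i
      show (if h : i ∈ S then _ else _) = x.1 i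
      by_cases h : i ∈ S
      · rw [dif_pos h]; rfl
      · rw [dif_neg h]; rfl
    · intro p
      have coeq : ∀ (q : ({i // i ∈ S} ≃ {x // x ∈ T}) × ({i // i ∈ Sᶜ} ≃ {x // x ∈ V \ T}))
        (i : {i // i ∈ S}), True := fun _ _ => trivial
      refine Prod.ext ?_ ?_
      · apply Equiv.ext
        intro i
        apply Subtype.ext
        show (if h : i.1 ∈ S then ((p.1 ⟨i.1, h⟩ : β)) else _) = (p.1 i : β)
        rw [dif_pos i.2, Subtype.coe_eta]
      · apply Equiv.ext
        intro i
        apply Subtype.ext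
        show (if h : i.1 ∈ S then _ else ((p.2 ⟨i.1, Finset.mem_compl.mpr h⟩ : β))) = (p.2 i : β)
        rw [dif_neg (Finset.mem_compl.mp i.2), Subtype.coe_eta]
  rw [Fintype.card_congr E, Fintype.card_prod,
    Fintype.card_equiv (Fintype.equivOfCardEq (by simp only [Fintype.card_coe, hST])),
    Fintype.card_equiv (Fintype.equivOfCardEq (by simp only [Fintype.card_coe, hcompl])),
    Fintype.card_coe, Fintype.card_coe]

/-! ### The main polynomial identity -/

lemma inner_sum {K : Type*} [Field K] {n d : ℕ}
    (hchar : ringChar K = 0 ∨ n < ringChar K) (hdn : d ≤ n)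
    (S : Finset (Fin n)) (hS : S.card = d) :
    ∑ ι : Fin n ↪ Fin (n + d),
      delta K n d (d - ((Finset.univ.image ⇑ι) ∩
        (Finset.univ.filter fun i : Fin (n+d) => (i : ℕ) < d)).card) •
          ∏ i ∈ S.image ⇑ι, (X i : MvPolynomial (Fin (n+d)) K)
    = ((d.factorial * (n-d).factorial : ℕ) : K) •
        ∏ i ∈ (Finset.univ.filter fun i : Fin (n+d) => (i : ℕ) < d),
          (X i : MvPolynomial (Fin (n+d)) K) := by
  classical
  set D := (Finset.univ.filter fun i : Fin (n+d) => (i : ℕ) < d) with hDdef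
  have hD : D.card = d := card_filter_lt _ _ (by omega)
  set pairs := ((Finset.univ.powersetCard n (α := Fin (n+d))) ×ˢ
      (Finset.univ.powersetCard d)).filter (fun p => p.2 ⊆ p.1) with hpairs
  have hmaps : ∀ ι : Fin n ↪ Fin (n+d), ι ∈ (Finset.univ : Finset (Fin n ↪ Fin (n+d))) →
      (Finset.univ.image ⇑ι, S.image ⇑ι) ∈ pairs := by
    intro ι _
    simp only [hpairs, Finset.mem_filter, Finset.mem_product, Finset.mem_powersetCard_univ]
    refine ⟨⟨?_, ?_⟩, Finset.image_subset_image (Finset.subset_univ S)⟩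
    · rw [Finset.card_image_of_injective _ ι.injective, Finset.card_univ, Fintype.card_fin]
    · rw [Finset.card_image_of_injective _ ι.injective, hS]
  rw [← Finset.sum_fiberwise_of_maps_to hmaps
    (fun ι => delta K n d (d - ((Finset.univ.image ⇑ι) ∩ D).card) • ∏ i ∈ S.image ⇑ι,
      (X i : MvPolynomial (Fin (n+d)) K))]
  have hfib : ∀ p ∈ pairs,
      (∑ ι ∈ Finset.univ.filter
          (fun ι : Fin n ↪ Fin (n+d) => (Finset.univ.image ⇑ι, S.image ⇑ι) = p),
        delta K n d (d - ((Finset.univ.image ⇑ι) ∩ D).card) • ∏ i ∈ S.image ⇑ι,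
          (X i : MvPolynomial (Fin (n+d)) K))
      = (d.factorial * (n-d).factorial) •
          (delta K n d (d - (p.1 ∩ D).card) • ∏ i ∈ p.2, (X i : MvPolynomial (Fin (n+d)) K)) := by
    rintro ⟨V, T⟩ hp
    simp only [hpairs, Finset.mem_filter, Finset.mem_product, Finset.mem_powersetCard_univ] at hp
    obtain ⟨⟨hV, hT⟩, hTV⟩ := hp
    rw [Finset.sum_congr rfl (fun ι hι => by
      obtain ⟨h1, h2⟩ := Prod.mk.injEq .. ▸ (Finset.mem_filter.mp hι).2
      rw [h1, h2] :
        ∀ ι ∈ Finset.univ.filter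
          (fun ι : Fin n ↪ Fin (n+d) => (Finset.univ.image ⇑ι, S.image ⇑ι) = (V, T)),
          delta K n d (d - ((Finset.univ.image ⇑ι) ∩ D).card) • ∏ i ∈ S.image ⇑ι,
            (X i : MvPolynomial (Fin (n+d)) K)
          = delta K n d (d - (V ∩ D).card) • ∏ i ∈ T, (X i : MvPolynomial (Fin (n+d)) K))]
    rw [Finset.sum_const]
    congr 1
    have : (Finset.univ.filter
        (fun ι : Fin n ↪ Fin (n+d) => (Finset.univ.image ⇑ι, S.image ⇑ι) = (V, T)))
        = (Finset.univ.filter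
        (fun ι : Fin n ↪ Fin (n+d) => Finset.univ.image ⇑ι = V ∧ S.image ⇑ι = T)) := by
      apply Finset.filter_congr
      intro ι _
      rw [Prod.mk.injEq]
    rw [this, fiber_card S V T (by rw [hS, hT]) hTV
      (by rw [Finset.card_compl, Fintype.card_fin, Finset.card_sdiff_of_subset hTV, hV, hT, hS]),
      hS, Finset.card_compl, hS, Fintype.card_fin]
  rw [Finset.sum_congr rfl hfib]
  rw [hpairs]
  rw [Finset.sum_filter]
  rw [Finset.sum_product_right]
  have hTsum : ∀ T ∈ (Finset.univ.powersetCard d (α := Fin (n+d))),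
      (∑ V ∈ Finset.univ.powersetCard n, if T ⊆ V then
        (d.factorial * (n-d).factorial) •
          (delta K n d (d - (V ∩ D).card) • ∏ i ∈ T, (X i : MvPolynomial (Fin (n+d)) K)) else 0)
      = if T = D then (d.factorial * (n-d).factorial) •
          ∏ i ∈ D, (X i : MvPolynomial (Fin (n+d)) K) else 0 := by
    intro T hT
    rw [← Finset.sum_filter]
    rw [← Finset.smul_sum, ← Finset.sum_smul]
    rw [gamma_sum hchar hdn (Fintype.card_fin _) D hD T
      (Finset.mem_powersetCard_univ.mp hT)]
    by_cases hTD : T = D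
    · rw [if_pos hTD, if_pos hTD, hTD, one_smul]
    · rw [if_neg hTD, if_neg hTD, zero_smul, smul_zero]
  rw [Finset.sum_congr rfl hTsum]
  rw [Finset.sum_ite_eq' (Finset.univ.powersetCard d) D
    (fun T => (d.factorial * (n-d).factorial) •
      ∏ i ∈ D, (X i : MvPolynomial (Fin (n+d)) K))]
  rw [if_pos (Finset.mem_powersetCard_univ.mpr hD)]
  rw [Nat.cast_smul_eq_nsmul]

lemma key {K : Type*} [Field K] {n d : ℕ}
    (hchar : ringChar K = 0 ∨ n < ringChar K) (hdn : d ≤ n)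
    (f : MvPolynomial (Fin n) K) (hf : f.IsHomogeneous d)
    (hsq : ∀ v ∈ f.support, ∀ i, v i ≤ 1) :
    ∑ ι : Fin n ↪ Fin (n + d),
      delta K n d (d - ((Finset.univ.image ⇑ι) ∩
        (Finset.univ.filter fun i : Fin (n+d) => (i : ℕ) < d)).card) • rename ⇑ι f
    = (((d.factorial * (n-d).factorial : ℕ) : K) * eval (fun _ => (1:K)) f) •
        ∏ i ∈ (Finset.univ.filter fun i : Fin (n+d) => (i : ℕ) < d),
          (X i : MvPolynomial (Fin (n+d)) K) := by
  classical
  have hdeg : ∀ v ∈ f.support, ∑ i ∈ v.support, v i = d := by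
    intro v hv
    have := hf (MvPolynomial.mem_support_iff.mp hv)
    simpa [Finsupp.weight_apply, Finsupp.sum] using this
  have hone : ∀ v ∈ f.support, ∀ i ∈ v.support, v i = 1 := by
    intro v hv i hi
    have h1 := hsq v hv i
    have h2 := Finsupp.mem_support_iff.mp hi
    omega
  have hcards : ∀ v ∈ f.support, v.support.card = d := by
    intro v hv
    have h := hdeg v hv
    rw [Finset.sum_congr rfl (hone v hv)] at h
    simpa using h
  have hren : ∀ ι : Fin n ↪ Fin (n+d), rename (⇑ι) f
      = ∑ v ∈ f.support, C (coeff v f) * ∏ i ∈ v.support.image ⇑ι,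
          (X i : MvPolynomial (Fin (n+d)) K) := by
    intro ι
    conv_lhs => rw [← support_sum_monomial_coeff f]
    rw [map_sum]
    refine Finset.sum_congr rfl fun v hv => ?_
    rw [monomial_eq, Finsupp.prod]
    rw [Finset.prod_congr rfl (fun i hi => by rw [hone v hv i hi, pow_one] :
      ∀ i ∈ v.support, (X i : MvPolynomial (Fin n) K) ^ v i = X i)]
    rw [map_mul, rename_C, map_prod]
    simp_rw [rename_X]
    rw [Finset.prod_image (fun i _ j _ h => ι.injective h)]
  rw [Finset.sum_congr rfl (fun ι _ => by rw [hren ι])]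
  simp_rw [Finset.smul_sum]
  rw [Finset.sum_comm]
  simp_rw [← mul_smul_comm]
  rw [Finset.sum_congr rfl (fun v hv => by
    rw [← Finset.mul_sum, inner_sum hchar hdn v.support (hcards v hv)])]
  rw [← Finset.sum_mul]
  have hC : (∑ v ∈ f.support, C (coeff v f) : MvPolynomial (Fin (n+d)) K)
      = C (eval (fun _ => (1:K)) f) := by
    rw [eval_eq, map_sum]
    refine Finset.sum_congr rfl fun v hv => ?_
    simp
  rw [hC, mul_smul_comm, ← smul_eq_C_mul, smul_smul]

lemma supp_one {K : Type*} [Field K] {n : ℕ} {f : MvPolynomial (Fin n) K}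
    (hsq : ∀ v ∈ f.support, ∀ i, v i ≤ 1) :
    ∀ v ∈ f.support, ∀ i ∈ v.support, v i = 1 := by
  intro v hv i hi
  have h1 := hsq v hv i
  have h2 := Finsupp.mem_support_iff.mp hi
  omega

lemma supp_card {K : Type*} [Field K] {n d : ℕ} {f : MvPolynomial (Fin n) K}
    (hf : f.IsHomogeneous d) (hsq : ∀ v ∈ f.support, ∀ i, v i ≤ 1) :
    ∀ v ∈ f.support, v.support.card = d := by
  intro v hv
  have h : ∑ i ∈ v.support, v i = d := by
    have := hf (MvPolynomial.mem_support_iff.mp hv)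
    simpa [Finsupp.weight_apply, Finsupp.sum] using this
  rw [Finset.sum_congr rfl (supp_one hsq v hv)] at h
  simpa using h

lemma rename_inj_eq_sum {K : Type*} [Field K] {n : ℕ} {τ : Type*} [DecidableEq τ]
    (f : MvPolynomial (Fin n) K)
    (hsq : ∀ v ∈ f.support, ∀ i, v i ≤ 1) (u : Fin n → τ) (hu : Function.Injective u) :
    rename u f = ∑ v ∈ f.support, C (coeff v f) * ∏ i ∈ v.support.image u,
      (X i : MvPolynomial τ K) := by
  conv_lhs => rw [← support_sum_monomial_coeff f]
  rw [map_sum]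
  refine Finset.sum_congr rfl fun v hv => ?_
  rw [monomial_eq, Finsupp.prod]
  rw [Finset.prod_congr rfl (fun i hi => by rw [supp_one hsq v hv i hi, pow_one] :
    ∀ i ∈ v.support, (X i : MvPolynomial (Fin n) K) ^ v i = X i)]
  rw [map_mul, rename_C, map_prod]
  simp_rw [rename_X]
  rw [Finset.prod_image (fun i _ j _ h => hu h)]

lemma rename_mem_symOrbitIdeal {K : Type*} [Field K] {N : ℕ}
    (h g : MvPolynomial (Fin N) K)
    (σ : Equiv.Perm (Fin N)) (hg : g ∈ symOrbitIdeal h) :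
    rename ⇑σ g ∈ symOrbitIdeal h := by
  have h1 : rename ⇑σ g ∈ Ideal.map (rename ⇑σ : MvPolynomial (Fin N) K →ₐ[K] _).toRingHom
      (symOrbitIdeal h) := Ideal.mem_map_of_mem _ hg
  rw [symOrbitIdeal, Ideal.map_span] at h1
  refine Ideal.span_mono ?_ h1
  rintro _ ⟨p, ⟨τ, rfl⟩, rfl⟩
  refine ⟨τ.trans σ, ?_⟩
  show rename ⇑σ (rename ⇑τ h) = _
  rw [rename_rename]
  rfl

end SqFreeOrbit

theorem squarefree_terms_orbit_ideal (K : Type*) [Field K] (n d N : ℕ)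
    (hchar : ringChar K = 0 ∨ n < ringChar K)
    (f : MvPolynomial (Fin n) K) (hf : f.IsHomogeneous d)
    (hsq : ∀ v ∈ f.support, ∀ i, v i ≤ 1)
    (hone : eval (fun _ => (1 : K)) f ≠ 0)
    (hN : n + d ≤ N) :
    symOrbitIdeal (rename (Fin.castLE (by omega : n ≤ N)) f)
      = symOrbitIdeal (∏ i ∈ Finset.univ.filter (fun i : Fin N => (i : ℕ) < d), X i) := by
  classical
  have hnN : n ≤ N := by omega
  set DN := (Finset.univ.filter fun i : Fin N => (i : ℕ) < d) with hDN
  set m : MvPolynomial (Fin N) K := ∏ i ∈ DN, X i with hm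
  have hfne : f ≠ 0 := fun h0 => hone (by rw [h0, map_zero])
  have hdn : d ≤ n := by
    obtain ⟨v₀, hv₀⟩ := Finset.nonempty_iff_ne_empty.mpr
      (fun h => hfne (MvPolynomial.support_eq_empty.mp h))
    have h1 := SqFreeOrbit.supp_card hf hsq v₀ hv₀
    have h2 : v₀.support.card ≤ n := by simpa using Finset.card_le_univ v₀.support
    omega
  have hinj : Function.Injective (Fin.castLE hnN) := Fin.castLE_injective hnN
  have hDNcard : DN.card = d := SqFreeOrbit.card_filter_lt N d (by omega)
  set κ : K := ((d.factorial * (n-d).factorial : ℕ) : K) * eval (fun _ => (1:K)) f with hκ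
  have hκne : κ ≠ 0 := by
    refine mul_ne_zero (SqFreeOrbit.cast_ne_zero_of_char n hchar
      (Nat.mul_pos (Nat.factorial_pos d) (Nat.factorial_pos (n-d)))
      ⟨n.choose d, by rw [← Nat.choose_mul_factorial_mul_factorial hdn]; ring⟩) hone
  -- m belongs to the orbit ideal of (the renamed) f
  have hmem : m ∈ symOrbitIdeal (rename (Fin.castLE hnN) f) := by
    have KEY := SqFreeOrbit.key (n := n) (d := d) hchar hdn f hf hsq
    have hmapsum : rename (Fin.castLE hN)
        (∑ ι : Fin n ↪ Fin (n + d),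
          SqFreeOrbit.delta K n d (d - ((Finset.univ.image ⇑ι) ∩
            (Finset.univ.filter fun i : Fin (n+d) => (i : ℕ) < d)).card) • rename ⇑ι f)
        = ∑ ι : Fin n ↪ Fin (n + d),
          SqFreeOrbit.delta K n d (d - ((Finset.univ.image ⇑ι) ∩
            (Finset.univ.filter fun i : Fin (n+d) => (i : ℕ) < d)).card) •
              rename (Fin.castLE hN ∘ ⇑ι) f := by
      rw [map_sum]
      exact Finset.sum_congr rfl fun ι _ => by rw [map_smul, rename_rename]
    have himg : (Finset.univ.filter fun i : Fin (n+d) => (i : ℕ) < d).image (Fin.castLE hN)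
        = DN := by
      ext j
      simp only [Finset.mem_image, Finset.mem_filter, Finset.mem_univ, true_and, hDN]
      constructor
      · rintro ⟨i, hi, rfl⟩
        simpa using hi
      · intro hj
        exact ⟨⟨j.1, by omega⟩, hj, Fin.val_injective rfl⟩
    have hmapprod : rename (Fin.castLE hN)
        (κ • ∏ i ∈ (Finset.univ.filter fun i : Fin (n+d) => (i : ℕ) < d),
          (X i : MvPolynomial (Fin (n+d)) K)) = κ • m := by
      rw [map_smul, map_prod]
      simp_rw [rename_X]
      rw [← Finset.prod_image (fun i _ j _ h => Fin.castLE_injective hN h), himg]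
    have heq : (∑ ι : Fin n ↪ Fin (n + d),
          SqFreeOrbit.delta K n d (d - ((Finset.univ.image ⇑ι) ∩
            (Finset.univ.filter fun i : Fin (n+d) => (i : ℕ) < d)).card) •
              rename (Fin.castLE hN ∘ ⇑ι) f) = κ • m := by
      rw [← hmapsum, KEY, hmapprod]
    have hsummem : ∀ ι : Fin n ↪ Fin (n + d),
        rename (Fin.castLE hN ∘ ⇑ι) f ∈ symOrbitIdeal (rename (Fin.castLE hnN) f) := by
      intro ι
      obtain ⟨σ, hσ⟩ := SqFreeOrbit.exists_perm_comp ((Fin.castLE hnN) : Fin n → Fin N)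
        (Fin.castLE hN ∘ ⇑ι) hinj ((Fin.castLE_injective hN).comp ι.injective)
      have hfeq : rename (Fin.castLE hN ∘ ⇑ι) f
          = rename ⇑σ (rename (Fin.castLE hnN) f) := by
        rw [rename_rename]
        exact congrArg (fun g => rename g f) (funext fun a => (hσ a).symm)
      rw [hfeq]
      exact Ideal.subset_span ⟨σ, rfl⟩
    have hκm : κ • m ∈ symOrbitIdeal (rename (Fin.castLE hnN) f) := by
      rw [← heq]
      exact Ideal.sum_mem _ (fun ι _ => by
        rw [smul_eq_C_mul]
        exact Ideal.mul_mem_left _ _ (hsummem ι))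
    have hminv : m = κ⁻¹ • (κ • m) := by
      rw [smul_smul, inv_mul_cancel₀ hκne, one_smul]
    rw [hminv, smul_eq_C_mul]
    exact Ideal.mul_mem_left _ _ hκm
  apply le_antisymm
  · refine Ideal.span_le.mpr ?_
    rintro g ⟨σ, rfl⟩
    rw [rename_rename]
    rw [SqFreeOrbit.rename_inj_eq_sum f hsq (⇑σ ∘ Fin.castLE hnN)
      (σ.injective.comp hinj)]
    apply Ideal.sum_mem
    intro v hv
    apply Ideal.mul_mem_left
    obtain ⟨τ, hτ⟩ := SqFreeOrbit.exists_perm_image DN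
      (v.support.image (⇑σ ∘ Fin.castLE hnN))
      (by rw [hDNcard, Finset.card_image_of_injective _ (σ.injective.comp hinj),
        SqFreeOrbit.supp_card hf hsq v hv])
    have hprod : (∏ i ∈ v.support.image (⇑σ ∘ Fin.castLE hnN),
        (X i : MvPolynomial (Fin N) K)) = rename ⇑τ m := by
      rw [hm, map_prod]
      simp_rw [rename_X]
      rw [← Finset.prod_image (fun i _ j _ h => τ.injective h), hτ]
    rw [hprod]
    exact Ideal.subset_span ⟨τ, rfl⟩
  · refine Ideal.span_le.mpr ?_
    rintro g ⟨σ, rfl⟩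
    exact SqFreeOrbit.rename_mem_symOrbitIdeal _ _ σ hmem
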